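/- Let E be a real Banach space, B : E → E a compact linear operator, and suppose μ* ∈ ℝ is a bifurcation point of the equation φ = μ·B φ + D(φ, μ), where D is continuous with ‖D(φ,μ)‖/‖φ‖ → 0 as ‖φ‖ → 0 uniformly for μ near μ*. Then μ* is a characteristic value of B, i.e. there exists φ ≠ 0 with φ = μ*·B φ. -/
import Mathlib


open Filter Topology

/-- Necessity half of Krasnoselskii's linearization theorem: a bifurcation point of
`φ = μ·Bφ + D(φ,μ)` with `B` compact linear and `D` of higher order at `0`
(uniformly for `μ` near `μ*`) is a characteristic value of `B`. -/
theorem bifurcation_point_is_characteristic_value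
    {E : Type*} [NormedAddCommGroup E] [NormedSpace ℝ E] [CompleteSpace E]
    (B : E →L[ℝ] E) (hB : IsCompactOperator B)
    (D : E → ℝ → E) (hDcont : Continuous fun p : E × ℝ => D p.1 p.2)
    (μstar : ℝ)
    (hDo : ∀ ε > 0, ∃ δ > 0, ∀ φ : E, ∀ μ : ℝ,
        ‖φ‖ < δ → |μ - μstar| < δ → ‖D φ μ‖ ≤ ε * ‖φ‖)
    (μseq : ℕ → ℝ) (φseq : ℕ → E)
    (hμ : Tendsto μseq atTop (𝓝 μstar))
    (hφ0 : Tendsto φseq atTop (𝓝 0))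
    (hφne : ∀ k, φseq k ≠ 0)
    (heq : ∀ k, φseq k = μseq k • B (φseq k) + D (φseq k) (μseq k)) :
    ∃ φ : E, φ ≠ 0 ∧ φ = μstar • B φ := by
  have hnφ : ∀ k, ‖φseq k‖ ≠ 0 := fun k => norm_ne_zero_iff.2 (hφne k)
  set ψ : ℕ → E := fun k => ‖φseq k‖⁻¹ • φseq k with hψdef
  have hψnorm : ∀ k, ‖ψ k‖ = 1 := fun k => by
    simp [hψdef, norm_smul, inv_mul_cancel₀ (hnφ k)]
  set r : ℕ → E := fun k => ‖φseq k‖⁻¹ • D (φseq k) (μseq k) with hrdef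
  have heqψ : ∀ k, ψ k = μseq k • B (ψ k) + r k := by
    intro k
    show ‖φseq k‖⁻¹ • φseq k
        = μseq k • B (‖φseq k‖⁻¹ • φseq k) + ‖φseq k‖⁻¹ • D (φseq k) (μseq k)
    rw [map_smul, smul_comm, ← smul_add, ← heq k]
  -- remainder tends to 0
  have hr0 : Tendsto r atTop (𝓝 0) := by
    rw [NormedAddCommGroup.tendsto_nhds_zero]
    intro ε hε
    obtain ⟨δ, hδ, hbound⟩ := hDo (ε / 2) (half_pos hε)
    have h1 : ∀ᶠ k in atTop, ‖φseq k‖ < δ := by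
      have h := hφ0.norm
      rw [norm_zero] at h
      exact h.eventually (gt_mem_nhds hδ)
    have h2 : ∀ᶠ k in atTop, |μseq k - μstar| < δ := by
      have h := hμ.eventually (Metric.ball_mem_nhds μstar hδ)
      filter_upwards [h] with k hk
      simpa [Real.dist_eq] using hk
    filter_upwards [h1, h2] with k hk1 hk2
    calc ‖r k‖ = ‖φseq k‖⁻¹ * ‖D (φseq k) (μseq k)‖ := by
          rw [hrdef]; simp [norm_smul]
      _ ≤ ‖φseq k‖⁻¹ * (ε / 2 * ‖φseq k‖) :=
          mul_le_mul_of_nonneg_left (hbound _ _ hk1 hk2)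
            (inv_nonneg.2 (norm_nonneg _))
      _ = ε / 2 := by
          rw [mul_comm (ε / 2), ← mul_assoc, inv_mul_cancel₀ (hnφ k), one_mul]
      _ < ε := half_lt_self hε
  -- compactness: extract convergent subsequence of B (ψ k)
  have hScomp : IsCompact (closure (B '' Metric.closedBall (0 : E) 1)) :=
    hB.isCompact_closure_image_of_bounded Metric.isBounded_closedBall
  have hmem : ∀ k, B (ψ k) ∈ closure (B '' Metric.closedBall (0 : E) 1) := fun k =>
    subset_closure ⟨ψ k, by simp [mem_closedBall_zero_iff, hψnorm k], rfl⟩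
  obtain ⟨z, _, g, hg, hgz⟩ := hScomp.tendsto_subseq hmem
  have hμg : Tendsto (fun n => μseq (g n)) atTop (𝓝 μstar) := hμ.comp hg.tendsto_atTop
  have hrg : Tendsto (fun n => r (g n)) atTop (𝓝 0) := hr0.comp hg.tendsto_atTop
  have hψg : Tendsto (fun n => ψ (g n)) atTop (𝓝 (μstar • z)) := by
    have h := (hμg.smul hgz).add hrg
    rw [add_zero] at h
    refine h.congr fun n => ?_
    exact (heqψ (g n)).symm
  have hBlim : Tendsto (fun n => B (ψ (g n))) atTop (𝓝 (B (μstar • z))) :=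
    (B.continuous.tendsto _).comp hψg
  have hz_eq : z = B (μstar • z) := tendsto_nhds_unique hgz hBlim
  have hnorm1 : ‖μstar • z‖ = 1 := by
    have h1 : Tendsto (fun n => ‖ψ (g n)‖) atTop (𝓝 ‖μstar • z‖) := hψg.norm
    have h2 : Tendsto (fun n => ‖ψ (g n)‖) atTop (𝓝 1) :=
      tendsto_const_nhds.congr fun n => (hψnorm (g n)).symm
    exact tendsto_nhds_unique h1 h2
  refine ⟨μstar • z, ?_, ?_⟩
  · intro h
    rw [h, norm_zero] at hnorm1
    exact one_ne_zero hnorm1.symm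
  · conv_lhs => rw [show z = B (μstar • z) from hz_eq]
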